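/- Let D_0 ≤ D_1 ≤ … ≤ D_{l−1} be the (nondecreasing) partial distance profile of an l×l invertible binary kernel K. If D_1 = 2, then D_i is even for all i ≥ 1. -/

import Mathlib

/-- Hamming distance from a vector `v` to a set (code) `C` in `𝔽₂ⁿ`. -/
noncomputable def distTo {n : ℕ} (C : Set (Fin n → ZMod 2)) (v : Fin n → ZMod 2) : ℕ :=
  sInf ((fun c => hammingDist v c) '' C)

/-- Minimum distance of a code: minimum Hamming weight of its nonzero elements. -/
noncomputable def minDist {n : ℕ} (C : Set (Fin n → ZMod 2)) : ℕ :=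
  sInf (hammingNorm '' (C \ {0}))

/-- The kernel code `C_K^{(φ)}`: the span of rows `φ, …, l−1` of `K`. -/
def kernelCode {l : ℕ} (K : Matrix (Fin l) (Fin l) (ZMod 2)) (φ : ℕ) :
    Submodule (ZMod 2) (Fin l → ZMod 2) :=
  Submodule.span (ZMod 2) {v | ∃ i : Fin l, φ ≤ (i : ℕ) ∧ v = K i}

/-- The `i`-th partial distance of `K`: distance from row `i` to the span of rows `i+1, …, l−1`. -/
noncomputable def PD {l : ℕ} (K : Matrix (Fin l) (Fin l) (ZMod 2)) (i : Fin l) : ℕ :=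
  distTo (kernelCode K ((i : ℕ) + 1) : Set (Fin l → ZMod 2)) (K i)

lemma zmod2_cases : ∀ a : ZMod 2, a = 0 ∨ a = 1 := by decide

lemma parity_hammingNorm {n : ℕ} (w : Fin n → ZMod 2) :
    ((hammingNorm w : ℕ) : ZMod 2) = ∑ i, w i := by
  rw [hammingNorm, Finset.card_filter]
  push_cast
  refine Finset.sum_congr rfl fun i _ => ?_
  rcases zmod2_cases (w i) with h | h <;> simp [h]

lemma mem_kernelCode_iff {l : ℕ} (K : Matrix (Fin l) (Fin l) (ZMod 2)) (φ : ℕ)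
    (v : Fin l → ZMod 2) :
    v ∈ kernelCode K φ ↔
      ∃ c : {i : Fin l // φ ≤ (i : ℕ)} → ZMod 2, ∑ i, c i • K i.1 = v := by
  rw [kernelCode]
  have h : {v | ∃ i : Fin l, φ ≤ (i : ℕ) ∧ v = K i}
      = Set.range (fun i : {i : Fin l // φ ≤ (i : ℕ)} => K i.1) := by
    ext w
    constructor
    · rintro ⟨i, hi, rfl⟩; exact ⟨⟨i, hi⟩, rfl⟩
    · rintro ⟨i, rfl⟩; exact ⟨i.1, i.2, rfl⟩
  rw [h, Submodule.mem_span_range_iff_exists_fun]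

lemma row_mem_kernelCode {l : ℕ} (K : Matrix (Fin l) (Fin l) (ZMod 2)) {φ : ℕ} {i : Fin l}
    (h : φ ≤ (i : ℕ)) : K i ∈ kernelCode K φ :=
  Submodule.subset_span ⟨i, h, rfl⟩

lemma kernelCode_mono {l : ℕ} (K : Matrix (Fin l) (Fin l) (ZMod 2)) {φ ψ : ℕ} (h : φ ≤ ψ) :
    kernelCode K ψ ≤ kernelCode K φ := by
  apply Submodule.span_mono
  rintro v ⟨i, hi, rfl⟩
  exact ⟨i, le_trans h hi, rfl⟩

section Main

variable {l : ℕ} (hl : 1 < l) (K : Matrix (Fin l) (Fin l) (ZMod 2))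

/-- Every nonzero codeword of the code spanned by rows `≥ 1` has weight at least 2. -/
lemma codeword_wt (hmono : ∀ i j : Fin l, i ≤ j → PD K i ≤ PD K j)
    (h1 : PD K ⟨1, hl⟩ = 2) (v : Fin l → ZMod 2) (hv : v ∈ kernelCode K 1) (hv0 : v ≠ 0) :
    2 ≤ hammingNorm v := by
  obtain ⟨c, hc⟩ := (mem_kernelCode_iff K 1 v).1 hv
  set S : Finset {i : Fin l // 1 ≤ (i : ℕ)} := Finset.univ.filter (fun i => c i ≠ 0) with hS
  have hSne : S.Nonempty := by
    by_contra h
    apply hv0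
    rw [← hc]
    refine Finset.sum_eq_zero fun i _ => ?_
    have hci : c i = 0 := by
      by_contra hci
      exact h ⟨i, Finset.mem_filter.2 ⟨Finset.mem_univ _, hci⟩⟩
    simp [hci]
  set j0 := S.min' hSne with hj0
  have hj0S : j0 ∈ S := S.min'_mem hSne
  have hsum : v = ∑ i ∈ S, K i.1 := by
    rw [← hc]
    rw [← Finset.sum_subset (Finset.subset_univ S) (fun i _ hiS => by
      have : c i = 0 := by
        by_contra hci
        exact hiS (Finset.mem_filter.2 ⟨Finset.mem_univ _, hci⟩)
      simp [this])]
    refine Finset.sum_congr rfl fun i hi => ?_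
    have hci : c i ≠ 0 := (Finset.mem_filter.1 hi).2
    rcases zmod2_cases (c i) with h | h
    · exact absurd h hci
    · simp [h]
  have hsplit : v = K j0.1 + ∑ i ∈ S.erase j0, K i.1 := by
    rw [hsum]
    exact (Finset.add_sum_erase S (fun i => K i.1) hj0S).symm
  have hw : (∑ i ∈ S.erase j0, K i.1) ∈ kernelCode K ((j0.1 : ℕ) + 1) := by
    refine Submodule.sum_mem _ fun i hi => ?_
    have hne : i ≠ j0 := (Finset.mem_erase.1 hi).1
    have hiS : i ∈ S := (Finset.mem_erase.1 hi).2
    have hle : j0 ≤ i := S.min'_le i hiS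
    have hlt : (j0.1 : ℕ) < (i.1 : ℕ) := by
      rcases lt_or_eq_of_le hle with h | h
      · exact Fin.lt_def.mp (Subtype.coe_lt_coe.mpr h)
      · exact absurd h.symm hne
    exact row_mem_kernelCode K hlt
  have hmemC : K j0.1 - v ∈ kernelCode K ((j0.1 : ℕ) + 1) := by
    have : K j0.1 - v = -(∑ i ∈ S.erase j0, K i.1) := by
      rw [hsplit]; ring
    rw [this]
    exact Submodule.neg_mem _ hw
  have hPDle : PD K j0.1 ≤ hammingNorm v := by
    have hd : hammingDist (K j0.1) (K j0.1 - v) = hammingNorm v := by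
      rw [hammingDist_eq_hammingNorm, neg_add_eq_sub, sub_sub_cancel_left]; simp [hammingNorm]
    rw [PD, distTo]
    exact Nat.sInf_le ⟨K j0.1 - v, hmemC, hd⟩
  have h2le : 2 ≤ PD K j0.1 := by
    rw [← h1]
    exact hmono _ _ (by simpa [Fin.le_def] using j0.2)
  omega

/-- The parity of every codeword of the code spanned by rows `≥ 1` is zero. -/
lemma code_parity (hK : IsUnit K.det)
    (hmono : ∀ i j : Fin l, i ≤ j → PD K i ≤ PD K j)
    (h1 : PD K ⟨1, hl⟩ = 2) (v : Fin l → ZMod 2) (hv : v ∈ kernelCode K 1) :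
    ∑ i, v i = 0 := by
  classical
  set e : Fin l → (Fin l → ZMod 2) := fun k => Pi.single k (1 : ZMod 2) with he
  have hek : ∀ k, e k ∉ kernelCode K 1 := by
    intro k hk
    have hnz : e k ≠ 0 := by
      intro h
      have := congrFun h k
      simp [he] at this
    have h2 : 2 ≤ hammingNorm (e k) := codeword_wt hl K hmono h1 _ hk hnz
    have h1' : hammingNorm (e k) = 1 := by
      rw [hammingNorm]
      have : ({i | e k i ≠ 0} : Finset (Fin l)) = {k} := by
        ext j
        simp [he, Pi.single_apply]
      rw [this, Finset.card_singleton]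
    omega
  have hchar : ∀ x : Fin l → ZMod 2, x + x = 0 := by
    intro x; funext i
    rcases zmod2_cases (x i) with h | h <;> simp [h]
    decide
  set z : Fin l := ⟨0, by omega⟩ with hz
  have key : ∀ w : Fin l → ZMod 2, Matrix.vecMul w K = ∑ i, w i • K i := by
    intro w
    funext j
    rw [Finset.sum_apply]
    simp [Matrix.vecMul, dotProduct]
  have hrep : ∀ u : Fin l → ZMod 2, ∃ c : Fin l → ZMod 2, u = ∑ i, c i • K i := by
    intro u
    refine ⟨Matrix.vecMul u K⁻¹, ?_⟩
    have h2 : Matrix.vecMul (Matrix.vecMul u K⁻¹) K = u := by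
      rw [Matrix.vecMul_vecMul, Matrix.nonsing_inv_mul K hK, Matrix.vecMul_one]
    rw [← key, h2]
  have hK0 : ∀ k, K z + e k ∈ kernelCode K 1 := by
    intro k
    obtain ⟨c, hc⟩ := hrep (e k)
    have hcsplit : e k = c z • K z + ∑ i ∈ Finset.univ.erase z, c i • K i := by
      rw [hc]
      exact (Finset.add_sum_erase _ (fun i => c i • K i) (Finset.mem_univ z)).symm
    have hrest : (∑ i ∈ Finset.univ.erase z, c i • K i) ∈ kernelCode K 1 := by
      refine Submodule.sum_mem _ fun i hi => ?_
      have hiz : i ≠ z := (Finset.mem_erase.1 hi).1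
      have h1i : 1 ≤ (i : ℕ) := by
        have : (i : ℕ) ≠ 0 := fun h => hiz (Fin.ext (by simp [hz, h]))
        omega
      exact Submodule.smul_mem _ _ (row_mem_kernelCode K h1i)
    rcases zmod2_cases (c z) with h | h
    · exfalso
      apply hek k
      rw [hcsplit, h, zero_smul, zero_add]
      exact hrest
    · have : K z + e k = ∑ i ∈ Finset.univ.erase z, c i • K i := by
        rw [hcsplit, h, one_smul]
        rw [← add_assoc, hchar, zero_add]
      rw [this]
      exact hrest
  set m : Fin l := z with hm
  have hpair : ∀ j, e j + e m ∈ kernelCode K 1 := by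
    intro j
    have := Submodule.add_mem _ (hK0 j) (hK0 m)
    have heq : K z + e j + (K z + e m) = e j + e m := by
      have : K z + e j + (K z + e m) = (K z + K z) + (e j + e m) := by ring
      rw [this, hchar, zero_add]
    rwa [heq] at this
  by_contra hp
  have hp1 : ∑ i, v i = 1 := by
    rcases zmod2_cases (∑ i, v i) with h | h
    · exact absurd h hp
    · exact h
  have hu : (∑ j, v j • (e j + e m)) ∈ kernelCode K 1 :=
    Submodule.sum_mem _ fun j _ => Submodule.smul_mem _ _ (hpair j)
  have hbasis : ∑ j, v j • e j = v := by
    funext k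
    rw [Finset.sum_apply]
    simp only [Pi.smul_apply, he, Pi.single_apply, smul_eq_mul, mul_ite, mul_one, mul_zero]
    rw [Finset.sum_ite_eq Finset.univ k v]
    simp
  have hucalc : (∑ j, v j • (e j + e m)) = v + e m := by
    have : (∑ j, v j • (e j + e m)) = (∑ j, v j • e j) + (∑ j, v j) • e m := by
      rw [Finset.sum_smul]
      rw [← Finset.sum_add_distrib]
      refine Finset.sum_congr rfl fun j _ => ?_
      rw [smul_add]
    rw [this, hbasis, hp1, one_smul]
  apply hek m
  have : e m = (∑ j, v j • (e j + e m)) - v := by rw [hucalc]; ring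
  rw [this]
  exact Submodule.sub_mem _ hu hv

end Main

theorem stmt_8 {l : ℕ} (hl : 1 < l) (K : Matrix (Fin l) (Fin l) (ZMod 2))
    (hK : IsUnit K.det)
    (hmono : ∀ i j : Fin l, i ≤ j → PD K i ≤ PD K j)
    (h1 : PD K ⟨1, hl⟩ = 2) :
    ∀ i : Fin l, 1 ≤ (i : ℕ) → Even (PD K i) := by
  intro i hi
  have h0C : (0 : Fin l → ZMod 2) ∈ kernelCode K ((i : ℕ) + 1) := Submodule.zero_mem _
  have hne : ((fun c => hammingDist (K i) c) ''
      (kernelCode K ((i : ℕ) + 1) : Set (Fin l → ZMod 2))).Nonempty :=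
    ⟨_, ⟨0, h0C, rfl⟩⟩
  have hmem : PD K i ∈ ((fun c => hammingDist (K i) c) ''
      (kernelCode K ((i : ℕ) + 1) : Set (Fin l → ZMod 2))) := by
    rw [PD, distTo]
    exact Nat.sInf_mem hne
  obtain ⟨c, hcC, hdist⟩ := hmem
  have hdist' : hammingDist (K i) c = PD K i := hdist
  have hKiC : K i ∈ kernelCode K 1 := row_mem_kernelCode K hi
  have hcC1 : c ∈ kernelCode K 1 := kernelCode_mono K (by omega) hcC
  have hpar : ((PD K i : ℕ) : ZMod 2) = 0 := by
    rw [← hdist', hammingDist_eq_hammingNorm, parity_hammingNorm]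
    have hA := code_parity hl K hK hmono h1 _ hKiC
    have hB := code_parity hl K hK hmono h1 _ hcC1
    simp only [Pi.add_apply, Pi.neg_apply]
    rw [Finset.sum_add_distrib, Finset.sum_neg_distrib, hA, hB, neg_zero, add_zero]
  have := (ZMod.natCast_eq_zero_iff _ 2).1 hpar
  exact even_iff_two_dvd.2 this
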